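/- arXiv:1411.7746 — 4 statements merged into one kernel-verified Lean document; each statement's English description precedes it below -/
import Mathlib

section
/- Bound on K_1 via Lagrange basis (Wainerman consequence): for each fixed x ∈ [-1,1] and every u ∈ [-1,1], |K_1(u)| ≤ max_{1≤j≤n} ‖ℓ_j‖_∞, where K_1(u) = 1_{x≥u} - ∑_{j=1}^n 1_{x_j ≥ u} ℓ_j(x). -/
open Finset

/-- The `k`-th Lagrange basis polynomial for nodes `x : Fin n → ℝ`. -/
noncomputable def lagBasis {n : ℕ} (x : Fin n → ℝ) (k : Fin n) (t : ℝ) : ℝ :=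
  ∏ j ∈ Finset.univ.erase k, (t - x j) / (x k - x j)

noncomputable def lam (s : Finset ℝ) (b x : ℝ) : ℝ :=
  ∏ c ∈ s.erase b, (x - c) / (b - c)

lemma pe (s : Finset ℝ) (b m x : ℝ) (hm : m ∈ s) (hb : b ∈ s) (hbm : b ≠ m) :
    (x - m) * lam (s.erase m) b x = (b - m) * lam s b x := by
  have hm' : m ∈ s.erase b := Finset.mem_erase.mpr ⟨fun h => hbm h.symm, hm⟩
  have h1 : lam s b x = (x - m) / (b - m) * ∏ c ∈ (s.erase b).erase m, (x - c) / (b - c) :=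
    (Finset.mul_prod_erase _ _ hm').symm
  have h2 : lam (s.erase m) b x = ∏ c ∈ (s.erase b).erase m, (x - c) / (b - c) := by
    unfold lam; rw [Finset.erase_right_comm]
  have hbm' : b - m ≠ 0 := sub_ne_zero.mpr hbm
  rw [h1, h2]
  field_simp

lemma sumIdent (s t : Finset ℝ) (x m M : ℝ) (hm : m ∈ s) (hM : M ∈ s) (hts : t ⊆ s) :
    (M - m) * ∑ b ∈ t, lam s b x
      = (x - m) * ∑ b ∈ t.erase m, lam (s.erase m) b x
        - (x - M) * ∑ b ∈ t.erase M, lam (s.erase M) b x := by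
  have h1 : (x - m) * ∑ b ∈ t.erase m, lam (s.erase m) b x
      = ∑ b ∈ t, (b - m) * lam s b x := by
    rw [Finset.mul_sum]
    calc ∑ b ∈ t.erase m, (x - m) * lam (s.erase m) b x
        = ∑ b ∈ t.erase m, (b - m) * lam s b x := Finset.sum_congr rfl fun b hb =>
          pe s b m x hm (hts (Finset.mem_of_mem_erase hb)) (Finset.ne_of_mem_erase hb)
      _ = ∑ b ∈ t, (b - m) * lam s b x := Finset.sum_erase t (by simp)
  have h2 : (x - M) * ∑ b ∈ t.erase M, lam (s.erase M) b x
      = ∑ b ∈ t, (b - M) * lam s b x := by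
    rw [Finset.mul_sum]
    calc ∑ b ∈ t.erase M, (x - M) * lam (s.erase M) b x
        = ∑ b ∈ t.erase M, (b - M) * lam s b x := Finset.sum_congr rfl fun b hb =>
          pe s b M x hM (hts (Finset.mem_of_mem_erase hb)) (Finset.ne_of_mem_erase hb)
      _ = ∑ b ∈ t, (b - M) * lam s b x := Finset.sum_erase t (by simp)
  rw [h1, h2, ← Finset.sum_sub_distrib, Finset.mul_sum]
  exact Finset.sum_congr rfl fun b _ => by ring

lemma unityN : ∀ (N : ℕ) (s : Finset ℝ), s.card ≤ N → s.Nonempty → ∀ x : ℝ,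
    ∑ b ∈ s, lam s b x = 1 := by
  intro N
  induction N with
  | zero =>
    intro s hcard hne x
    rcases hne with ⟨a, ha⟩
    exact absurd (Finset.card_pos.mpr ⟨a, ha⟩) (by omega)
  | succ N ih =>
    intro s hcard hne x
    by_cases h1 : s.card = 1
    · obtain ⟨a, rfl⟩ := Finset.card_eq_one.mp h1
      simp [lam]
    · have h2 : 1 < s.card := by
        have := Finset.card_pos.mpr hne; omega
      set m := s.min' hne with hm
      set M := s.max' hne with hM
      have hmM : m < M := Finset.min'_lt_max'_of_card s h2
      have hms : m ∈ s := s.min'_mem hne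
      have hMs : M ∈ s := s.max'_mem hne
      have key := sumIdent s s x m M hms hMs (Finset.Subset.refl s)
      have hcm : (s.erase m).card ≤ N := by
        have := Finset.card_erase_of_mem hms; omega
      have hcM : (s.erase M).card ≤ N := by
        have := Finset.card_erase_of_mem hMs; omega
      have hnem : (s.erase m).Nonempty := by
        rw [← Finset.card_pos, Finset.card_erase_of_mem hms]; omega
      have hneM : (s.erase M).Nonempty := by
        rw [← Finset.card_pos, Finset.card_erase_of_mem hMs]; omega
      rw [ih (s.erase m) hcm hnem x, ih (s.erase M) hcM hneM x] at key
      have hMm : M - m ≠ 0 := sub_ne_zero.mpr (ne_of_gt hmM)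
      have : (M - m) * ∑ b ∈ s, lam s b x = (M - m) * 1 := by rw [key]; ring
      exact mul_left_cancel₀ hMm this

lemma unity (s : Finset ℝ) (hne : s.Nonempty) (x : ℝ) : ∑ b ∈ s, lam s b x = 1 :=
  unityN s.card s le_rfl hne x

lemma tail_bound : ∀ (N : ℕ) (s t : Finset ℝ) (a x : ℝ), s.card ≤ N →
    a ∈ t → (∀ b ∈ t, b ≤ a) → (∀ b ∈ s, b ≤ a → b ∈ t) → t ⊆ s → a < x →
    ∃ θ : ℝ, 0 ≤ θ ∧ θ ≤ 1 ∧ ∑ b ∈ t, lam s b x = θ * lam s a x := by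
  intro N
  induction N with
  | zero =>
    intro s t a x hcard hat _ _ hts _
    exact absurd (Finset.card_pos.mpr ⟨a, hts hat⟩) (by omega)
  | succ N ih =>
    intro s t a x hcard hat hta hsta hts hax
    have has : a ∈ s := hts hat
    have hs : s.Nonempty := ⟨a, has⟩
    set m := s.min' hs with hm
    set M := s.max' hs with hMdef
    have hms : m ∈ s := s.min'_mem hs
    have hMs : M ∈ s := s.max'_mem hs
    by_cases hMa : M ≤ a
    · have haM : a = M := le_antisymm (s.le_max' a has) hMa
      have hts' : t = s :=
        Finset.Subset.antisymm hts (fun b hb => hsta b hb (le_trans (s.le_max' b hb) hMa))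
      have hsum : ∑ b ∈ t, lam s b x = 1 := by rw [hts']; exact unity s hs x
      have hone : 1 ≤ lam s a x := by
        unfold lam
        have := Finset.prod_le_prod (s := s.erase a) (f := fun _ => (1:ℝ))
          (g := fun c => (x - c) / (a - c)) (fun _ _ => zero_le_one) ?_
        · simpa using this
        intro c hc
        have hcs : c ∈ s := Finset.mem_of_mem_erase hc
        have hca : c < a := lt_of_le_of_ne (haM ▸ s.le_max' c hcs)
          (fun h => (Finset.ne_of_mem_erase hc) h)
        rw [one_le_div (by linarith)]
        linarith
      refine ⟨(lam s a x)⁻¹, by positivity, inv_le_one_of_one_le₀ hone, ?_⟩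
      rw [hsum, inv_mul_cancel₀ (by linarith)]
    · push_neg at hMa
      by_cases ham : a = m
      · have ht1 : t = {a} := by
          apply Finset.Subset.antisymm
          · intro b hb
            have h1 : b ≤ a := hta b hb
            have h2 : m ≤ b := s.min'_le b (hts hb)
            simp [le_antisymm h1 (ham ▸ h2)]
          · simp [hat]
        rw [ht1, Finset.sum_singleton]
        exact ⟨1, zero_le_one, le_refl 1, (one_mul _).symm⟩
      · have hma : m < a := lt_of_le_of_ne (s.min'_le a has) (Ne.symm ham)
        have hMt : M ∉ t := fun h => absurd (hta M h) (not_le.mpr hMa)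
        obtain ⟨θ₁, hθ₁0, hθ₁1, h1⟩ := ih (s.erase m) (t.erase m) a x
          (by have := Finset.card_erase_of_mem hms; omega)
          (Finset.mem_erase.mpr ⟨ham, hat⟩)
          (fun b hb => hta b (Finset.mem_of_mem_erase hb))
          (fun b hb hba => Finset.mem_erase.mpr
            ⟨(Finset.mem_erase.mp hb).1, hsta b (Finset.mem_of_mem_erase hb) hba⟩)
          (fun b hb => Finset.mem_erase.mpr
            ⟨(Finset.mem_erase.mp hb).1, hts (Finset.mem_of_mem_erase hb)⟩)
          hax
        obtain ⟨θ₂, hθ₂0, hθ₂1, h2⟩ := ih (s.erase M) t a x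
          (by have := Finset.card_erase_of_mem hMs; omega)
          hat hta
          (fun b hb hba => hsta b (Finset.mem_of_mem_erase hb) hba)
          (fun b hb => Finset.mem_erase.mpr
            ⟨ne_of_lt (lt_of_le_of_lt (hta b hb) hMa), hts hb⟩)
          hax
        have key := sumIdent s t x m M hms hMs hts
        rw [Finset.erase_eq_of_notMem hMt] at key
        rw [h1, h2] at key
        have pe1 : (x - m) * lam (s.erase m) a x = (a - m) * lam s a x :=
          pe s a m x hms has ham
        have pe2 : (x - M) * lam (s.erase M) a x = (a - M) * lam s a x :=
          pe s a M x hMs has (ne_of_lt hMa)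
        have key2 : (M - m) * ∑ b ∈ t, lam s b x
            = (θ₁ * (a - m) + θ₂ * (M - a)) * lam s a x := by
          linear_combination key + θ₁ * pe1 - θ₂ * pe2
        have hMm : (0:ℝ) < M - m := by linarith
        refine ⟨(θ₁ * (a - m) + θ₂ * (M - a)) / (M - m), ?_, ?_, ?_⟩
        · apply div_nonneg _ (le_of_lt hMm)
          have : 0 ≤ θ₁ * (a - m) := mul_nonneg hθ₁0 (by linarith)
          have : 0 ≤ θ₂ * (M - a) := mul_nonneg hθ₂0 (by linarith)
          linarith
        · rw [div_le_one hMm]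
          have : θ₁ * (a - m) ≤ 1 * (a - m) := mul_le_mul_of_nonneg_right hθ₁1 (by linarith)
          have : θ₂ * (M - a) ≤ 1 * (M - a) := mul_le_mul_of_nonneg_right hθ₂1 (by linarith)
          linarith
        · rw [div_mul_eq_mul_div, eq_div_iff (ne_of_gt hMm)]
          linear_combination key2

lemma lam_neg (s : Finset ℝ) (b x : ℝ) :
    lam (s.image (fun c => -c)) (-b) (-x) = lam s b x := by
  unfold lam
  have h : (s.image (fun c => -c)).erase (-b) = (s.erase b).image (fun c => -c) :=
    (Finset.image_erase neg_injective s b).symm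
  rw [h, Finset.prod_image (fun a _ c _ h => neg_injective h)]
  apply Finset.prod_congr rfl
  intro c _
  have e1 : -x - -c = -(x - c) := by ring
  have e2 : -b - -c = -(b - c) := by ring
  rw [e1, e2, neg_div_neg_eq]

lemma head_bound (s t : Finset ℝ) (a x : ℝ)
    (hat : a ∈ t) (hta : ∀ b ∈ t, a ≤ b) (hsta : ∀ b ∈ s, a ≤ b → b ∈ t)
    (hts : t ⊆ s) (hax : x < a) :
    ∃ θ : ℝ, 0 ≤ θ ∧ θ ≤ 1 ∧ ∑ b ∈ t, lam s b x = θ * lam s a x := by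
  obtain ⟨θ, h0, h1, hsum⟩ := tail_bound (s.image (fun c => -c)).card
    (s.image (fun c => -c)) (t.image (fun c => -c)) (-a) (-x) le_rfl
    (Finset.mem_image_of_mem _ hat)
    (by
      intro b hb
      obtain ⟨c, hc, rfl⟩ := Finset.mem_image.mp hb
      exact neg_le_neg (hta c hc))
    (by
      intro b hb hba
      obtain ⟨c, hc, rfl⟩ := Finset.mem_image.mp hb
      exact Finset.mem_image_of_mem _ (hsta c hc (by linarith [neg_le_neg hba])))
    (Finset.image_subset_image hts)
    (by linarith)
  refine ⟨θ, h0, h1, ?_⟩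
  rw [Finset.sum_image (fun a _ c _ h => neg_injective h)] at hsum
  simp only [lam_neg] at hsum
  exact hsum

theorem stmt12 {n : ℕ} (hn : 0 < n) (x : Fin n → ℝ)
    (hdec : ∀ i j : Fin n, i < j → x j < x i)
    (hmem : ∀ i, x i ∈ Set.Icc (-1 : ℝ) 1)
    (xv : ℝ) (hxv : xv ∈ Set.Icc (-1 : ℝ) 1) :
    ∀ u ∈ Set.Icc (-1 : ℝ) 1,
      |(if u ≤ xv then (1 : ℝ) else 0) -
          ∑ j, (if u ≤ x j then (1 : ℝ) else 0) * lagBasis x j xv| ≤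
        Finset.univ.sup' ⟨⟨0, hn⟩, Finset.mem_univ _⟩
          (fun j => sSup ((fun t => |lagBasis x j t|) '' Set.Icc (-1 : ℝ) 1)) := by
  intro u _
  have hanti : StrictAnti x := fun i j h => hdec i j h
  have hinj : Function.Injective x := hanti.injective
  set s : Finset ℝ := Finset.univ.image x with hs
  have hsne : s.Nonempty := ⟨x ⟨0, hn⟩, Finset.mem_image_of_mem x (Finset.mem_univ _)⟩
  have hlag : ∀ (j : Fin n) (t : ℝ), lagBasis x j t = lam s (x j) t := by
    intro j t
    unfold lagBasis lam
    rw [hs, ← Finset.image_erase hinj, Finset.prod_image (fun a _ b _ h => hinj h)]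
  set R := Finset.univ.sup' (⟨⟨0, hn⟩, Finset.mem_univ _⟩ : Finset.univ.Nonempty)
      (fun j : Fin n => sSup ((fun t => |lagBasis x j t|) '' Set.Icc (-1 : ℝ) 1)) with hR
  have hRHS : ∀ (j : Fin n) (y : ℝ), y ∈ Set.Icc (-1:ℝ) 1 → |lagBasis x j y| ≤ R := by
    intro j y hy
    have hcont : Continuous fun t => |lagBasis x j t| := by
      apply Continuous.abs
      unfold lagBasis
      exact continuous_finset_prod _ fun i _ =>
        (continuous_id.sub continuous_const).div_const _
    have hbdd : BddAbove ((fun t => |lagBasis x j t|) '' Set.Icc (-1:ℝ) 1) :=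
      (isCompact_Icc.image hcont).bddAbove
    calc |lagBasis x j y| ≤ sSup ((fun t => |lagBasis x j t|) '' Set.Icc (-1:ℝ) 1) :=
          le_csSup hbdd ⟨y, hy, rfl⟩
      _ ≤ R := by
          rw [hR]
          exact Finset.le_sup'
            (fun j : Fin n => sSup ((fun t => |lagBasis x j t|) '' Set.Icc (-1 : ℝ) 1))
            (Finset.mem_univ j)
  have hsum : ∑ j, (if u ≤ x j then (1:ℝ) else 0) * lagBasis x j xv
      = ∑ b ∈ s.filter (fun b => u ≤ b), lam s b xv := by
    have h1 : ∀ j : Fin n, (if u ≤ x j then (1:ℝ) else 0) * lagBasis x j xv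
        = if u ≤ x j then lam s (x j) xv else 0 := by
      intro j; rw [hlag]; split <;> simp
    simp_rw [h1]
    rw [hs, Finset.filter_image, Finset.sum_image (fun a _ b _ h => hinj h),
      Finset.sum_filter]
  have hfinal : ∀ a : ℝ, a ∈ s → |lam s a xv| ≤ R := by
    intro a ha
    obtain ⟨j, _, hj⟩ := Finset.mem_image.mp (hs ▸ ha)
    have : lam s a xv = lagBasis x j xv := by rw [hlag, hj]
    rw [this]; exact hRHS j xv hxv
  have hthetabound : ∀ (θ la : ℝ), 0 ≤ θ → θ ≤ 1 → |θ * la| ≤ |la| := by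
    intro θ la h0 h1
    rw [abs_mul, abs_of_nonneg h0]
    nlinarith [abs_nonneg la]
  by_cases hc : u ≤ xv
  · rw [if_pos hc, hsum]
    have hsplit : (1:ℝ) - ∑ b ∈ s.filter (fun b => u ≤ b), lam s b xv
        = ∑ b ∈ s.filter (fun b => ¬ u ≤ b), lam s b xv := by
      have hadd := Finset.sum_filter_add_sum_filter_not s (fun b => u ≤ b)
        (fun b => lam s b xv)
      have hu1 := unity s hsne xv
      linarith [hadd, hu1]
    rw [hsplit]
    rcases (s.filter (fun b => ¬ u ≤ b)).eq_empty_or_nonempty with he | hne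
    · rw [he, Finset.sum_empty, abs_zero]
      exact le_trans (abs_nonneg _) (hRHS ⟨0, hn⟩ xv hxv)
    · set t0 := s.filter (fun b => ¬ u ≤ b) with ht0
      set a := t0.max' hne with ha
      have hat : a ∈ t0 := t0.max'_mem hne
      have haprop := Finset.mem_filter.mp hat
      have hau : a < u := not_le.mp haprop.2
      obtain ⟨θ, h0, h1, hS⟩ := tail_bound s.card s t0 a xv le_rfl hat
        (fun b hb => t0.le_max' b hb)
        (fun b hb hba => Finset.mem_filter.mpr
          ⟨hb, fun hub => absurd (le_trans hub hba) (not_le.mpr hau)⟩)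
        (Finset.filter_subset _ _)
        (lt_of_lt_of_le hau hc)
      rw [hS]
      exact le_trans (hthetabound θ _ h0 h1) (hfinal a haprop.1)
  · rw [if_neg hc, hsum, zero_sub, abs_neg]
    rcases (s.filter (fun b => u ≤ b)).eq_empty_or_nonempty with he | hne
    · rw [he, Finset.sum_empty, abs_zero]
      exact le_trans (abs_nonneg _) (hRHS ⟨0, hn⟩ xv hxv)
    · set t0 := s.filter (fun b => u ≤ b) with ht0
      set a := t0.min' hne with ha
      have hat : a ∈ t0 := t0.min'_mem hne
      have haprop := Finset.mem_filter.mp hat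
      obtain ⟨θ, h0, h1, hS⟩ := head_bound s t0 a xv hat
        (fun b hb => t0.min'_le b hb)
        (fun b hb hba => Finset.mem_filter.mpr ⟨hb, le_trans haprop.2 hba⟩)
        (Finset.filter_subset _ _)
        (lt_of_lt_of_le (not_le.mp hc) haprop.2)
      rw [hS]
      exact le_trans (hthetabound θ _ h0 h1) (hfinal a haprop.1)
end

section
/- Wainerman's lemma (partial sums dominated by boundary term): for distinct nodes x_1 > ... > x_n in [-1,1] and x_{m+1} < u ≤ x_m, the partial sums a_k(u) = ∑_{j=1}^k ℓ_j(u) for k ≤ m and a_k(u) = ∑_{j=k}^n ℓ_j(u) for k ≥ m+1 satisfy |a_k(u)| ≤ |ℓ_k(u)| for all k = 1,...,n. -/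
open Finset

noncomputable def polesInv (Y : List ℝ) (t : ℝ) : ℝ := (Y.map (fun y => (t - y)⁻¹)).prod

@[simp] lemma polesInv_nil (t : ℝ) : polesInv [] t = 1 := rfl

@[simp] lemma polesInv_cons (y : ℝ) (Y : List ℝ) (t : ℝ) :
    polesInv (y :: Y) t = (t - y)⁻¹ * polesInv Y t := by
  simp [polesInv]

lemma polesInv_pos {Y : List ℝ} {t : ℝ} (h : ∀ y ∈ Y, y < t) : 0 < polesInv Y t := by
  induction Y with
  | nil => simp
  | cons y Y ih =>
    simp only [polesInv_cons]
    have h1 : (0:ℝ) < t - y := by have := h y (by simp); linarith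
    exact mul_pos (by positivity) (ih fun z hz => h z (by simp [hz]))

noncomputable def dd (s : Finset ℝ) (f : ℝ → ℝ) : ℝ :=
  ∑ z ∈ s, f z * (∏ w ∈ s.erase z, (z - w))⁻¹

lemma prod_erase_ne_zero (s : Finset ℝ) (z : ℝ) : (∏ w ∈ s.erase z, (z - w)) ≠ 0 := by
  exact Finset.prod_ne_zero_iff.2 fun w hw =>
    sub_ne_zero.2 (Ne.symm (Finset.ne_of_mem_erase hw))

lemma lemP : ∀ (N : ℕ) (s : Finset ℝ), s.card = N → s.Nonempty → ∀ t ∉ s,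
    ∑ z ∈ s, ((t - z) * ∏ w ∈ s.erase z, (z - w))⁻¹ = (∏ z ∈ s, (t - z))⁻¹ := by
  classical
  intro N
  induction N with
  | zero => intro s hc hne; exact absurd hc (by simp [Finset.card_eq_zero, hne.ne_empty])
  | succ N ih =>
    intro s hc hne t ht
    rcases Nat.eq_zero_or_pos N with hN | hN
    · subst hN
      obtain ⟨b, rfl⟩ := Finset.card_eq_one.mp hc
      have htb : t ≠ b := by simpa using ht
      simp [sub_ne_zero.2 htb]
    · obtain ⟨a, ha⟩ := hne
      set s'' := s.erase a with hs''
      have hins : s = insert a s'' := (Finset.insert_erase ha).symm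
      have hanotin : a ∉ s'' := Finset.notMem_erase a s
      have hcard'' : s''.card = N := by
        rw [hs'', Finset.card_erase_of_mem ha, hc]; omega
      have hne'' : s''.Nonempty := Finset.card_pos.mp (by omega)
      have hta : t ≠ a := fun h => ht (h ▸ ha)
      have hts : t ∉ s'' := fun h => ht (Finset.mem_of_mem_erase h)
      rw [hins, Finset.sum_insert hanotin, Finset.prod_insert hanotin,
        Finset.erase_insert hanotin]
      have hsum : ∀ z ∈ s'', ((t - z) * ∏ w ∈ (insert a s'').erase z, (z - w))⁻¹
          = (t - a)⁻¹ * ((a - z) * ∏ w ∈ s''.erase z, (z - w))⁻¹ * (-1)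
            + (t - a)⁻¹ * ((t - z) * ∏ w ∈ s''.erase z, (z - w))⁻¹ := by
        intro z hz
        have hza : z ≠ a := fun h => hanotin (h ▸ hz)
        rw [Finset.erase_insert_of_ne (Ne.symm hza), Finset.prod_insert (by simp [hanotin])]
        have h1 : t - z ≠ 0 := sub_ne_zero.2 fun h => hts (h ▸ hz)
        have h2 : z - a ≠ 0 := sub_ne_zero.2 hza
        have h3 : t - a ≠ 0 := sub_ne_zero.2 hta
        have h4 := prod_erase_ne_zero s'' z
        have h5 : a - z ≠ 0 := sub_ne_zero.2 (Ne.symm hza)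
        field_simp
        ring
      rw [Finset.sum_congr rfl hsum, Finset.sum_add_distrib, ← Finset.mul_sum, ← Finset.sum_mul,
        ← Finset.mul_sum, ih s'' hcard'' hne'' t hts, ih s'' hcard'' hne'' a hanotin]
      have h3 : t - a ≠ 0 := sub_ne_zero.2 hta
      have h6 : (∏ z ∈ s'', (a - z)) ≠ 0 :=
        Finset.prod_ne_zero_iff.2 fun w hw => sub_ne_zero.2 fun h => hanotin (h ▸ hw)
      have h7 : (∏ z ∈ s'', (t - z)) ≠ 0 :=
        Finset.prod_ne_zero_iff.2 fun w hw => sub_ne_zero.2 fun h => hts (h ▸ hw)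
      field_simp
      ring

lemma lemA (s : Finset ℝ) (h2 : 2 ≤ s.card) :
    ∑ z ∈ s, (∏ w ∈ s.erase z, (z - w))⁻¹ = 0 := by
  classical
  obtain ⟨a, ha⟩ : s.Nonempty := Finset.card_pos.mp (by omega)
  set s'' := s.erase a with hs''
  have hins : s = insert a s'' := (Finset.insert_erase ha).symm
  have hanotin : a ∉ s'' := Finset.notMem_erase a s
  have hne'' : s''.Nonempty := Finset.card_pos.mp (by
    rw [hs'', Finset.card_erase_of_mem ha]; omega)
  rw [hins, Finset.sum_insert hanotin, Finset.erase_insert hanotin]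
  have hsum : ∀ z ∈ s'', (∏ w ∈ (insert a s'').erase z, (z - w))⁻¹
      = -((a - z) * ∏ w ∈ s''.erase z, (z - w))⁻¹ := by
    intro z hz
    have hza : z ≠ a := fun h => hanotin (h ▸ hz)
    rw [Finset.erase_insert_of_ne (Ne.symm hza), Finset.prod_insert (by simp [hanotin])]
    rw [show z - a = -(a - z) by ring]
    rw [neg_mul, inv_neg]
  rw [Finset.sum_congr rfl hsum, Finset.sum_neg_distrib,
    lemP s''.card s'' rfl hne'' a hanotin]
  simp

lemma lemB (s : Finset ℝ) (a : ℝ) (ha : a ∈ s) (h2 : 2 ≤ s.card) (f : ℝ → ℝ) :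
    dd s f = dd (s.erase a) (fun z => (f z - f a) * (z - a)⁻¹) := by
  classical
  set s' := s.erase a with hs'
  have hins : s = insert a s' := (Finset.insert_erase ha).symm
  have hanotin : a ∉ s' := Finset.notMem_erase a s
  have hptw : ∀ z ∈ s', (f z - f a) * (z - a)⁻¹ * (∏ w ∈ s'.erase z, (z - w))⁻¹
      = f z * ((z - a) * ∏ w ∈ s'.erase z, (z - w))⁻¹
        - f a * ((z - a) * ∏ w ∈ s'.erase z, (z - w))⁻¹ := by
    intro z hz
    rw [mul_inv]
    ring
  have hkey : ∀ z ∈ s', ((z - a) * ∏ w ∈ s'.erase z, (z - w))⁻¹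
      = (∏ w ∈ s.erase z, (z - w))⁻¹ := by
    intro z hz
    have hza : z ≠ a := fun h => hanotin (h ▸ hz)
    rw [hins, Finset.erase_insert_of_ne (Ne.symm hza), Finset.prod_insert (by simp [hanotin])]
  have hA : ∑ z ∈ s', ((z - a) * ∏ w ∈ s'.erase z, (z - w))⁻¹
      = - (∏ w ∈ s', (a - w))⁻¹ := by
    have h0 := lemA s h2
    rw [hins, Finset.sum_insert hanotin, Finset.erase_insert hanotin] at h0
    have : ∑ z ∈ s', (∏ w ∈ (insert a s').erase z, (z - w))⁻¹
        = ∑ z ∈ s', ((z - a) * ∏ w ∈ s'.erase z, (z - w))⁻¹ := by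
      refine Finset.sum_congr rfl fun z hz => ?_
      have hza : z ≠ a := fun h => hanotin (h ▸ hz)
      rw [hkey z hz, hins, Finset.erase_insert_of_ne (Ne.symm hza),
        Finset.prod_insert (by simp [hanotin])]
    rw [this] at h0
    linarith
  unfold dd
  rw [Finset.sum_congr rfl hptw, Finset.sum_sub_distrib]
  have h1 : ∑ z ∈ s', f z * ((z - a) * ∏ w ∈ s'.erase z, (z - w))⁻¹
      = ∑ z ∈ s', f z * (∏ w ∈ s.erase z, (z - w))⁻¹ :=
    Finset.sum_congr rfl fun z hz => by rw [hkey z hz]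
  rw [h1, ← Finset.mul_sum, hA]
  rw [hins, Finset.sum_insert hanotin, Finset.erase_insert hanotin]
  have : ∀ z ∈ s', f z * (∏ w ∈ (insert a s').erase z, (z - w))⁻¹
      = f z * (∏ w ∈ s.erase z, (z - w))⁻¹ := by
    intro z hz
    have hza : z ≠ a := fun h => hanotin (h ▸ hz)
    rw [hins, Finset.erase_insert_of_ne (Ne.symm hza)]
  rw [Finset.sum_congr rfl this]
  ring

noncomputable def Haux (a : ℝ) : List ℝ → ℝ → ℝ
  | [] => fun _ => 0
  | (y :: Y) => fun z => (z - y)⁻¹ * (Haux a Y z - polesInv Y a * (a - y)⁻¹)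

@[simp] lemma Haux_nil (a z : ℝ) : Haux a [] z = 0 := rfl

@[simp] lemma Haux_cons (a y z : ℝ) (Y : List ℝ) :
    Haux a (y :: Y) z = (z - y)⁻¹ * (Haux a Y z - polesInv Y a * (a - y)⁻¹) := rfl

lemma Haux_eval (a z : ℝ) (Y : List ℝ) (hza : z ≠ a)
    (hY : ∀ y ∈ Y, y ≠ z ∧ y ≠ a) :
    Haux a Y z = (polesInv Y z - polesInv Y a) * (z - a)⁻¹ := by
  induction Y with
  | nil => simp
  | cons y Y ih =>
    have h1 : z - y ≠ 0 := sub_ne_zero.2 (Ne.symm (hY y (by simp)).1)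
    have h2 : a - y ≠ 0 := sub_ne_zero.2 (Ne.symm (hY y (by simp)).2)
    have h3 : z - a ≠ 0 := sub_ne_zero.2 hza
    rw [Haux_cons, polesInv_cons, polesInv_cons, ih (fun w hw => hY w (by simp [hw]))]
    field_simp
    ring

lemma dd_congr (s : Finset ℝ) (f g : ℝ → ℝ) (h : ∀ z ∈ s, f z = g z) :
    dd s f = dd s g :=
  Finset.sum_congr rfl fun z hz => by rw [h z hz]

lemma dd_sub_smul (s : Finset ℝ) (f g : ℝ → ℝ) (c : ℝ) :
    dd s (fun z => f z - c * g z) = dd s f - c * dd s g := by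
  unfold dd
  rw [Finset.mul_sum, ← Finset.sum_sub_distrib]
  refine Finset.sum_congr rfl fun z hz => by ring

lemma lemC : ∀ (N : ℕ) (s : Finset ℝ), s.card ≤ N → s.Nonempty →
    ∀ Y : List ℝ, Y ≠ [] → (∀ z ∈ s, ∀ y ∈ Y, y < z) →
    0 < (-1:ℝ)^(s.card - 1) * dd s (polesInv Y) := by
  classical
  intro N
  induction N with
  | zero =>
    intro s hc hne
    exact absurd hc (by have := Finset.card_pos.mpr hne; omega)
  | succ N ih =>
    intro s hc hne Y hYne hlt
    by_cases hcard1 : s.card = 1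
    · obtain ⟨b, rfl⟩ := Finset.card_eq_one.mp hcard1
      have : dd {b} (polesInv Y) = polesInv Y b := by
        simp [dd]
      rw [hcard1, this]
      simpa using polesInv_pos (fun y hy => hlt b (by simp) y hy)
    · have h2 : 2 ≤ s.card := by have := Finset.card_pos.mpr hne; omega
      set a := s.max' hne with hadef
      have ha : a ∈ s := s.max'_mem hne
      set s' := s.erase a with hs'def
      have hanotin : a ∉ s' := Finset.notMem_erase a s
      have hcard' : s'.card = s.card - 1 := Finset.card_erase_of_mem ha
      have hs'ne : s'.Nonempty := Finset.card_pos.mp (by omega)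
      have hs'lt : ∀ z ∈ s', z < a := fun z hz =>
        lt_of_le_of_ne (s.le_max' z (Finset.mem_of_mem_erase hz)) (Finset.ne_of_mem_erase hz)
      have hcardle : s'.card ≤ N := by omega
      -- inner induction
      have psi : ∀ (Y' : List ℝ), ∀ (Z : List ℝ),
          (∀ y ∈ Y', (∀ z ∈ s', y < z) ∧ y < a) →
          (∀ y ∈ Z, (∀ z ∈ s', y < z) ∧ y < a) →
          (Y' = [] → dd s' (fun z => Haux a Y' z * polesInv Z z) = 0) ∧
          (Y' ≠ [] → (-1:ℝ)^(s'.card - 1) * dd s' (fun z => Haux a Y' z * polesInv Z z) < 0) := by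
        intro Y'
        induction Y' with
        | nil =>
          intro Z _ _
          exact ⟨fun _ => by simp [dd], fun h => absurd rfl h⟩
        | cons y Y'' ihY =>
          intro Z hY hZ
          refine ⟨fun h => absurd h (List.cons_ne_nil y Y''), fun _ => ?_⟩
          have hdecomp : ∀ z, Haux a (y :: Y'') z * polesInv Z z
              = Haux a Y'' z * polesInv (y :: Z) z
                - (polesInv Y'' a * (a - y)⁻¹) * polesInv (y :: Z) z := by
            intro z; simp only [Haux_cons, polesInv_cons]; ring
          rw [dd_congr _ _ _ (fun z _ => hdecomp z),
            dd_sub_smul s' (fun z => Haux a Y'' z * polesInv (y :: Z) z) (polesInv (y :: Z))]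
          have hZ' : ∀ w ∈ (y :: Z), (∀ z ∈ s', w < z) ∧ w < a := by
            intro w hw
            rcases List.mem_cons.mp hw with h | h
            · exact h ▸ hY y (by simp)
            · exact hZ w h
          have hcpos : 0 < polesInv Y'' a * (a - y)⁻¹ := by
            have hya : y < a := (hY y (by simp)).2
            have h0 : 0 < polesInv Y'' a :=
              polesInv_pos (fun w hw => (hY w (by simp [hw])).2)
            exact mul_pos h0 (inv_pos.2 (by linarith))
          have hterm2 : 0 < (-1:ℝ)^(s'.card - 1) * dd s' (polesInv (y :: Z)) := by
            refine ih s' hcardle hs'ne (y :: Z) (List.cons_ne_nil y Z) ?_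
            intro z hz w hw
            exact (hZ' w hw).1 z hz
          have hmain : (-1:ℝ)^(s'.card - 1) * dd s' (fun z => Haux a Y'' z * polesInv (y :: Z) z) ≤ 0 := by
            rcases List.eq_nil_or_concat' Y'' with h | h
            · rw [(ihY (y :: Z) (fun w hw => hY w (by simp [hw])) hZ').1 h, mul_zero]
            · have := (ihY (y :: Z) (fun w hw => hY w (by simp [hw])) hZ').2 (by
                rcases h with ⟨l, b, rfl⟩; simp)
              linarith
          nlinarith [mul_pos hcpos hterm2]
      -- assemble
      have hstep : dd s (polesInv Y) = dd s' (fun z => Haux a Y z * polesInv [] z) := by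
        rw [lemB s a ha h2 (polesInv Y)]
        refine dd_congr _ _ _ fun z hz => ?_
        have hza : z ≠ a := Finset.ne_of_mem_erase hz
        rw [Haux_eval a z Y hza (fun y hy =>
          ⟨ne_of_lt (hlt z (Finset.mem_of_mem_erase hz) y hy),
           ne_of_lt (hlt a ha y hy)⟩)]
        simp
      have hpsi := (psi Y [] (fun y hy =>
          ⟨fun z hz => hlt z (Finset.mem_of_mem_erase hz) y hy, hlt a ha y hy⟩)
          (by simp)).2 hYne
      rw [hstep]
      have hpow : (-1:ℝ)^(s.card - 1) = -(-1:ℝ)^(s'.card - 1) := by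
        have h1 : s.card - 1 = (s'.card - 1) + 1 := by omega
        rw [h1, pow_succ]
        ring
      rw [hpow]
      linarith

lemma prod_neg' {α : Type*} (s : Finset α) (f : α → ℝ) :
    ∏ i ∈ s, (-f i) = (-1)^s.card * ∏ i ∈ s, f i := by
  calc ∏ i ∈ s, (-f i) = ∏ i ∈ s, ((-1) * f i) := by
        refine Finset.prod_congr rfl fun i _ => by ring
    _ = (∏ _i ∈ s, (-1:ℝ)) * ∏ i ∈ s, f i := Finset.prod_mul_distrib
    _ = (-1)^s.card * ∏ i ∈ s, f i := by rw [Finset.prod_const]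

lemma neg_one_pow_congr' (a b : ℕ) (h : a % 2 = b % 2) : ((-1:ℝ))^a = (-1)^b := by
  conv_lhs => rw [← Nat.div_add_mod a 2]
  conv_rhs => rw [← Nat.div_add_mod b 2]
  rw [pow_add, pow_add, pow_mul, pow_mul]
  simp [h, neg_one_sq]


lemma hxlt {n : ℕ} (x : Fin n → ℝ) (hdec : ∀ i j : Fin n, i < j → x j < x i) :
    ∀ i j : Fin n, (i : ℕ) < (j : ℕ) → x j < x i := fun i j h => hdec i j h

lemma hxinj {n : ℕ} (x : Fin n → ℝ) (hdec : ∀ i j : Fin n, i < j → x j < x i) :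
    Function.Injective x := by
  intro i j h
  by_contra hne
  rcases lt_or_gt_of_ne (fun e : (i:ℕ) = (j:ℕ) => hne (Fin.ext e)) with hl | hl
  · have := hxlt x hdec i j hl; rw [h] at this; exact lt_irrefl _ this
  · have := hxlt x hdec j i hl; rw [h] at this; exact lt_irrefl _ this

lemma cardFilterLe {n : ℕ} (K : ℕ) (hKn : K < n) :
    (univ.filter fun j : Fin n => (j : ℕ) ≤ K).card = K + 1 := by
  have : (univ.filter fun j : Fin n => (j : ℕ) ≤ K) = Finset.Iic (⟨K, hKn⟩ : Fin n) := by
    ext j; simp [Fin.le_def]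
  rw [this, Fin.card_Iic]

lemma cardFilterGe {n : ℕ} (K : ℕ) (hKn : K < n) :
    (univ.filter fun j : Fin n => K ≤ (j : ℕ)).card = n - K := by
  have : (univ.filter fun j : Fin n => K ≤ (j : ℕ)) = Finset.Ici (⟨K, hKn⟩ : Fin n) := by
    ext j; simp [Fin.le_def]
  rw [this, Fin.card_Ici]

lemma lagBasis_node {n : ℕ} (x : Fin n → ℝ) (hinj : Function.Injective x) (j i0 : Fin n) :
    lagBasis x j (x i0) = if j = i0 then 1 else 0 := by
  rcases eq_or_ne j i0 with rfl | hne
  · rw [if_pos rfl, lagBasis]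
    refine Finset.prod_eq_one fun i hi => ?_
    have hne' : x j - x i ≠ 0 :=
      sub_ne_zero.2 fun h => (Finset.ne_of_mem_erase hi) (hinj h).symm
    exact div_self hne'
  · rw [if_neg hne, lagBasis]
    refine Finset.prod_eq_zero (Finset.mem_erase.2 ⟨Ne.symm hne, Finset.mem_univ i0⟩) ?_
    simp

lemma neg_one_pow_cases (e : ℕ) : ((-1:ℝ))^e = 1 ∨ ((-1:ℝ))^e = -1 :=
  (Nat.even_or_odd e).imp Even.neg_one_pow Odd.neg_one_pow

lemma key_ineq (ε A L C : ℝ) (hε : ε = 1 ∨ ε = -1) (hA : 0 < ε * A) (hC : ε * C ≤ 0)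
    (hAL : A = L + C) : |A| ≤ |L| := by
  have hL : 0 < ε * L := by
    have h : ε * L = ε * A - ε * C := by rw [hAL]; ring
    linarith
  rcases hε with rfl | rfl
  · simp only [one_mul] at hA hC hL
    rw [abs_of_pos hA, abs_of_pos hL]
    linarith
  · have hA' : A < 0 := by nlinarith
    have hL' : L < 0 := by nlinarith
    rw [abs_of_neg hA', abs_of_neg hL']
    have hC' : 0 ≤ C := by nlinarith
    linarith

section Bridge

variable {n : ℕ} (x : Fin n → ℝ)
  (hdec : ∀ i j : Fin n, i < j → x j < x i)
  (m : Fin n) (hm : (m : ℕ) + 1 < n)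
  (u : ℝ) (hu1 : x ⟨(m : ℕ) + 1, hm⟩ < u) (hu2 : u < x m)

include hdec m hm hu1 hu2

lemma hu_lt_x : ∀ i : Fin n, (i : ℕ) ≤ (m : ℕ) → u < x i := by
  intro i hi
  rcases eq_or_lt_of_le hi with h | h
  · rw [Fin.ext (h : (i:ℕ) = (m:ℕ))]; exact hu2
  · exact hu2.trans (hxlt x hdec i m h)

lemma hx_lt_u : ∀ i : Fin n, (m : ℕ) < (i : ℕ) → x i < u := by
  intro i hi
  rcases eq_or_lt_of_le (Nat.succ_le_of_lt hi) with h | h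
  · rw [show i = ⟨(m:ℕ)+1, hm⟩ from Fin.ext (by exact h.symm)]; exact hu1
  · exact (hxlt x hdec ⟨(m:ℕ)+1, hm⟩ i h).trans hu1


lemma Wpos : 0 < (-1:ℝ)^((m:ℕ)+1) * ∏ i, (u - x i) := by
  classical
  have hult := hu_lt_x x hdec m hm u hu1 hu2
  set W := ∏ i, (u - x i) with hW
  have hWsplit : W = (∏ i ∈ univ.filter (fun i : Fin n => (i:ℕ) ≤ (m:ℕ)), (u - x i)) *
      ∏ i ∈ univ.filter (fun i : Fin n => ¬ (i:ℕ) ≤ (m:ℕ)), (u - x i) :=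
    (Finset.prod_filter_mul_prod_filter_not univ _ _).symm
  have hneg : ∏ i ∈ univ.filter (fun i : Fin n => (i:ℕ) ≤ (m:ℕ)), (u - x i)
      = (-1:ℝ)^((m:ℕ)+1) * ∏ i ∈ univ.filter (fun i : Fin n => (i:ℕ) ≤ (m:ℕ)), (x i - u) := by
    rw [← cardFilterLe (n := n) (m:ℕ) (by omega), ← prod_neg']
    refine Finset.prod_congr rfl fun i _ => by ring
  have hp1 : 0 < ∏ i ∈ univ.filter (fun i : Fin n => (i:ℕ) ≤ (m:ℕ)), (x i - u) :=
    Finset.prod_pos fun i hi => by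
      have := hult i (Finset.mem_filter.mp hi).2; linarith
  have hp2 : 0 < ∏ i ∈ univ.filter (fun i : Fin n => ¬ (i:ℕ) ≤ (m:ℕ)), (u - x i) :=
    Finset.prod_pos fun i hi => by
      have := hx_lt_u x hdec m hm u hu1 hu2 i (by
        have := (Finset.mem_filter.mp hi).2; omega)
      linarith
  have hsq : (-1:ℝ)^((m:ℕ)+1) * (-1:ℝ)^((m:ℕ)+1) = 1 := by
    rw [← pow_add]
    exact Even.neg_one_pow ⟨(m:ℕ)+1, rfl⟩
  calc (0:ℝ) < (∏ i ∈ univ.filter (fun i : Fin n => (i:ℕ) ≤ (m:ℕ)), (x i - u)) *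
        ∏ i ∈ univ.filter (fun i : Fin n => ¬ (i:ℕ) ≤ (m:ℕ)), (u - x i) := mul_pos hp1 hp2
    _ = (-1:ℝ)^((m:ℕ)+1) * W := by
        rw [hWsplit, hneg]
        linear_combination (-((∏ i ∈ univ.filter (fun i : Fin n => (i:ℕ) ≤ (m:ℕ)), (x i - u)) *
          ∏ i ∈ univ.filter (fun i : Fin n => ¬ (i:ℕ) ≤ (m:ℕ)), (u - x i))) * hsq

lemma signA (K : ℕ) (hK : K ≤ (m : ℕ)) :
    0 < (-1:ℝ)^((m : ℕ) + K) *
      ∑ j ∈ univ.filter (fun j : Fin n => (j : ℕ) ≤ K), lagBasis x j u := by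
  classical
  have hKn : K < n := by omega
  have hinj := hxinj x hdec
  have hxlt' := hxlt x hdec
  have hult := hu_lt_x x hdec m hm u hu1 hu2
  set J := univ.filter (fun j : Fin n => (j : ℕ) ≤ K) with hJ
  set P := univ.filter (fun i : Fin n => K < (i : ℕ)) with hP
  set W := ∏ i, (u - x i) with hW
  set YL : List ℝ := u :: (P.toList.map x) with hYL
  set s := J.image x with hs
  have hinjOn : ∀ a ∈ J, ∀ b ∈ J, x a = x b → a = b := fun a _ b _ h => hinj h
  have hJcard : J.card = K + 1 := cardFilterLe (n := n) K hKn
  have hscard : s.card = K + 1 := by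
    rw [hs, Finset.card_image_of_injOn (fun a ha b hb h => hinjOn a ha b hb h), hJcard]
  have hpoles : ∀ t : ℝ, polesInv YL t = (t - u)⁻¹ * ∏ i ∈ P, (t - x i)⁻¹ := by
    intro t
    rw [hYL, polesInv_cons]
    congr 1
    rw [polesInv, List.map_map, Finset.prod_map_toList]
    rfl
  have hJmem : ∀ j ∈ J, (j : ℕ) ≤ K := fun j hj => (Finset.mem_filter.mp hj).2
  -- per node value of dd summand matches lagBasis
  have hsum_eq : ∑ j ∈ J, lagBasis x j u = -W * dd s (polesInv YL) := by
    rw [dd, hs, Finset.sum_image hinjOn, Finset.mul_sum]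
    refine Finset.sum_congr rfl fun j hj => ?_
    have hjK : (j : ℕ) ≤ K := hJmem j hj
    rw [← Finset.image_erase hinj, Finset.prod_image
      (fun a ha b hb h => hinj h), hpoles (x j)]
    have hsplit : univ.erase j = (J.erase j) ∪ P := by
      ext i
      simp only [Finset.mem_erase, Finset.mem_union, Finset.mem_filter, Finset.mem_univ,
        true_and, and_true, hJ, hP]
      constructor
      · intro hij
        rcases le_or_gt (i : ℕ) K with h | h
        · exact Or.inl ⟨hij, h⟩
        · exact Or.inr h
      · rintro (⟨hij, _⟩ | h)
        · exact hij
        · exact fun e => by rw [e] at h; omega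
    have hdisj : Disjoint (J.erase j) P := by
      rw [Finset.disjoint_left]
      intro i hi hip
      have h1 := hJmem i (Finset.mem_of_mem_erase hi)
      have h2 := (Finset.mem_filter.mp hip).2
      omega
    have hlag : lagBasis x j u
        = (∏ i ∈ univ.erase j, (u - x i)) * (∏ i ∈ univ.erase j, (x j - x i))⁻¹ := by
      rw [lagBasis, Finset.prod_div_distrib, div_eq_mul_inv]
    have hprod1 : (∏ i ∈ univ.erase j, (u - x i)) * (u - x j) = W :=
      Finset.prod_erase_mul univ _ (Finset.mem_univ j)
    have huj : u - x j ≠ 0 := ne_of_lt (by linarith [hult j (by omega)])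
    have hprod2 : ∏ i ∈ univ.erase j, (x j - x i)
        = (∏ i ∈ J.erase j, (x j - x i)) * ∏ i ∈ P, (x j - x i) := by
      rw [hsplit, Finset.prod_union hdisj]
    have h1 : ∏ i ∈ univ.erase j, (u - x i) = W * (u - x j)⁻¹ := by
      field_simp [← hprod1]
      exact hprod1
    rw [hlag, h1, hprod2]
    rw [Finset.prod_inv_distrib]
    rw [show u - x j = -(x j - u) by ring, inv_neg, mul_inv]
    ring
  have hW_pos : 0 < (-1:ℝ)^((m:ℕ)+1) * W := Wpos x hdec m hm u hu1 hu2
  have hdd_pos : 0 < (-1:ℝ)^K * dd s (polesInv YL) := by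
    have hne : s.Nonempty := by
      refine Finset.Nonempty.image ⟨⟨0, by omega⟩, ?_⟩ x
      simp [hJ]
    have hcond : ∀ z ∈ s, ∀ y ∈ YL, y < z := by
      intro z hz y hy
      obtain ⟨j, hjJ, rfl⟩ := Finset.mem_image.mp hz
      have hjK := hJmem j hjJ
      rcases List.mem_cons.mp hy with rfl | hy
      · exact hult j (by omega)
      · obtain ⟨i, hiP, rfl⟩ := List.mem_map.mp hy
        have hiK : K < (i : ℕ) := (Finset.mem_filter.mp (Finset.mem_toList.mp hiP)).2
        exact hxlt' j i (by omega)
    have := lemC s.card s le_rfl hne YL (List.cons_ne_nil _ _) hcond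
    rwa [hscard, Nat.add_sub_cancel] at this
  have hfinal : (-1:ℝ)^((m:ℕ) + K) * ∑ j ∈ J, lagBasis x j u
      = ((-1:ℝ)^((m:ℕ)+1) * W) * ((-1:ℝ)^K * dd s (polesInv YL)) := by
    rw [hsum_eq, pow_add, pow_add, pow_one]
    ring
  rw [hfinal]
  exact mul_pos hW_pos hdd_pos


lemma signB (K : ℕ) (hKm : (m : ℕ) < K) (hKn : K < n) :
    0 < (-1:ℝ)^((m : ℕ) + K + 1) *
      ∑ j ∈ univ.filter (fun j : Fin n => K ≤ (j : ℕ)), lagBasis x j u := by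
  classical
  have hinj := hxinj x hdec
  have hxlt' := hxlt x hdec
  have hxltu := hx_lt_u x hdec m hm u hu1 hu2
  set J := univ.filter (fun j : Fin n => K ≤ (j : ℕ)) with hJ
  set P := univ.filter (fun i : Fin n => (i : ℕ) < K) with hP
  set W := ∏ i, (u - x i) with hW
  set xneg : Fin n → ℝ := fun j => -x j with hxneg
  set YL : List ℝ := (-u) :: (P.toList.map xneg) with hYL
  set s := J.image xneg with hs
  have hinjneg : Function.Injective xneg := fun a b h => hinj (by
    have : -x a = -x b := h
    linarith)
  have hinjOn : ∀ a ∈ J, ∀ b ∈ J, xneg a = xneg b → a = b := fun a _ b _ h => hinjneg h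
  have hJcard : J.card = n - K := cardFilterGe (n := n) K hKn
  have hscard : s.card = n - K := by
    rw [hs, Finset.card_image_of_injOn (fun a ha b hb h => hinjOn a ha b hb h), hJcard]
  have hJmem : ∀ j ∈ J, K ≤ (j : ℕ) := fun j hj => (Finset.mem_filter.mp hj).2
  have hpolesj : ∀ j : Fin n, polesInv YL (xneg j)
      = (u - x j)⁻¹ * ∏ i ∈ P, (x i - x j)⁻¹ := by
    intro j
    rw [hYL, polesInv_cons, polesInv, List.map_map, Finset.prod_map_toList]
    rw [show xneg j - -u = u - x j by rw [hxneg]; ring]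
    congr 1
    refine Finset.prod_congr rfl fun i _ => ?_
    show (xneg j - xneg i)⁻¹ = (x i - x j)⁻¹
    rw [hxneg]; congr 1; ring
  have hsum_eq : ∑ j ∈ J, lagBasis x j u = (-1:ℝ)^(n-1) * W * dd s (polesInv YL) := by
    rw [dd, hs, Finset.sum_image hinjOn, Finset.mul_sum]
    refine Finset.sum_congr rfl fun j hj => ?_
    have hjK : K ≤ (j : ℕ) := hJmem j hj
    rw [← Finset.image_erase hinjneg, Finset.prod_image
      (fun a ha b hb h => hinjneg h), hpolesj j]
    have hsplit : univ.erase j = (J.erase j) ∪ P := by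
      ext i
      simp only [Finset.mem_erase, Finset.mem_union, Finset.mem_filter, Finset.mem_univ,
        true_and, and_true, hJ, hP]
      constructor
      · intro hij
        rcases le_or_gt K (i : ℕ) with h | h
        · exact Or.inl ⟨hij, h⟩
        · exact Or.inr h
      · rintro (⟨hij, _⟩ | h)
        · exact hij
        · exact fun e => by rw [e] at h; omega
    have hdisj : Disjoint (J.erase j) P := by
      rw [Finset.disjoint_left]
      intro i hi hip
      have h1 := hJmem i (Finset.mem_of_mem_erase hi)
      have h2 := (Finset.mem_filter.mp hip).2
      omega
    have hlag : lagBasis x j u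
        = (∏ i ∈ univ.erase j, (u - x i)) * (∏ i ∈ univ.erase j, (x j - x i))⁻¹ := by
      rw [lagBasis, Finset.prod_div_distrib, div_eq_mul_inv]
    have hprod1 : (∏ i ∈ univ.erase j, (u - x i)) * (u - x j) = W :=
      Finset.prod_erase_mul univ _ (Finset.mem_univ j)
    have huj : u - x j ≠ 0 := ne_of_gt (by linarith [hxltu j (by omega)])
    have h1 : ∏ i ∈ univ.erase j, (u - x i) = W * (u - x j)⁻¹ := by
      field_simp [← hprod1]
      exact hprod1
    have hflip : ∏ i ∈ univ.erase j, (x j - x i)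
        = (-1:ℝ)^(n-1) * ∏ i ∈ univ.erase j, (x i - x j) := by
      rw [show (n - 1) = (univ.erase j : Finset (Fin n)).card by
          rw [Finset.card_erase_of_mem (Finset.mem_univ j), Finset.card_univ,
            Fintype.card_fin], ← prod_neg']
      refine Finset.prod_congr rfl fun i _ => by ring
    have hprod2 : ∏ i ∈ univ.erase j, (x i - x j)
        = (∏ i ∈ J.erase j, (x i - x j)) * ∏ i ∈ P, (x i - x j) := by
      rw [hsplit, Finset.prod_union hdisj]
    have hinvpow : ((-1:ℝ)^(n-1))⁻¹ = (-1:ℝ)^(n-1) := by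
      rw [← inv_pow, inv_neg, inv_one]
    have herase : ∀ i ∈ J.erase j, xneg j - xneg i = x i - x j := by
      intro i _; rw [hxneg]; ring
    rw [Finset.prod_congr rfl herase]
    rw [hlag, h1, hflip, hprod2, Finset.prod_inv_distrib, mul_inv, mul_inv, hinvpow]
    ring
  have hdd_pos : 0 < (-1:ℝ)^(n - K - 1) * dd s (polesInv YL) := by
    have hne : s.Nonempty := by
      refine Finset.Nonempty.image ⟨⟨K, hKn⟩, ?_⟩ xneg
      simp [hJ]
    have hcond : ∀ z ∈ s, ∀ y ∈ YL, y < z := by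
      intro z hz y hy
      obtain ⟨j, hjJ, rfl⟩ := Finset.mem_image.mp hz
      have hjK := hJmem j hjJ
      rcases List.mem_cons.mp hy with rfl | hy
      · have := hxltu j (by omega)
        rw [hxneg]
        simp only
        linarith
      · obtain ⟨i, hiP, rfl⟩ := List.mem_map.mp hy
        have hiK : (i : ℕ) < K := (Finset.mem_filter.mp (Finset.mem_toList.mp hiP)).2
        have := hxlt' i j (by omega)
        rw [hxneg]
        simp only
        linarith
    have := lemC s.card s le_rfl hne YL (List.cons_ne_nil _ _) hcond
    rwa [hscard] at this
  have hpe : ((-1:ℝ))^((m:ℕ)+K+1) * (-1:ℝ)^(n-1) = (-1:ℝ)^((m:ℕ)+1) * (-1:ℝ)^(n-K-1) := by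
    rw [← pow_add, ← pow_add]
    exact neg_one_pow_congr' _ _ (by omega)
  have hW_pos : 0 < (-1:ℝ)^((m:ℕ)+1) * W := Wpos x hdec m hm u hu1 hu2
  have hfinal : (-1:ℝ)^((m:ℕ)+K+1) * ∑ j ∈ J, lagBasis x j u
      = ((-1:ℝ)^((m:ℕ)+1) * W) * ((-1:ℝ)^(n-K-1) * dd s (polesInv YL)) := by
    rw [hsum_eq]
    linear_combination (W * dd s (polesInv YL)) * hpe
  rw [hfinal]
  exact mul_pos hW_pos hdd_pos

end Bridge

theorem stmt14 {n : ℕ} (x : Fin n → ℝ)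
    (hdec : ∀ i j : Fin n, i < j → x j < x i)
    (hmem : ∀ i, x i ∈ Set.Icc (-1 : ℝ) 1)
    (m : Fin n) (hm : (m : ℕ) + 1 < n)
    (u : ℝ) (hu1 : x ⟨(m : ℕ) + 1, hm⟩ < u) (hu2 : u ≤ x m) :
    ∀ k : Fin n,
      ((k : ℕ) ≤ (m : ℕ) →
        |∑ j ∈ Finset.univ.filter (fun j : Fin n => (j : ℕ) ≤ (k : ℕ)), lagBasis x j u| ≤
          |lagBasis x k u|) ∧
      ((m : ℕ) < (k : ℕ) →
        |∑ j ∈ Finset.univ.filter (fun j : Fin n => (k : ℕ) ≤ (j : ℕ)), lagBasis x j u| ≤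
          |lagBasis x k u|) := by
  classical
  intro k
  rcases eq_or_lt_of_le hu2 with hEq | hu2s
  · -- u = x m : lagBasis is a Kronecker delta
    have hinj := hxinj x hdec
    have hval : ∀ j : Fin n, lagBasis x j u = if j = m then 1 else 0 := by
      intro j; rw [hEq]; exact lagBasis_node x hinj j m
    constructor
    · intro hk
      rw [Finset.sum_congr rfl (fun j _ => hval j), Finset.sum_ite_eq' _ m (fun _ => (1:ℝ))]
      by_cases hkm : (m : ℕ) ≤ (k : ℕ)
      · have hkeq : k = m := Fin.ext (le_antisymm hk hkm)
        rw [if_pos (by simpa using hkm), hkeq, hval m, if_pos rfl]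
      · rw [if_neg (by simp; omega)]
        simp [abs_nonneg]
    · intro hk
      rw [Finset.sum_congr rfl (fun j _ => hval j), Finset.sum_ite_eq' _ m (fun _ => (1:ℝ))]
      rw [if_neg (by simp; omega)]
      simp [abs_nonneg]
  · -- strict case
    constructor
    · intro hk
      set K := (k : ℕ) with hKdef
      have hsplitk : univ.filter (fun j : Fin n => (j : ℕ) ≤ K)
          = insert k (univ.filter (fun j : Fin n => (j : ℕ) < K)) := by
        ext j
        simp only [Finset.mem_insert, Finset.mem_filter, Finset.mem_univ, true_and]
        constructor
        · intro h
          rcases eq_or_lt_of_le h with h | h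
          · exact Or.inl (Fin.ext h)
          · exact Or.inr h
        · rintro (rfl | h)
          · exact le_refl _
          · exact le_of_lt h
      have hknotin : k ∉ univ.filter (fun j : Fin n => (j : ℕ) < K) := by simp [hKdef]
      have hAsplit : ∑ j ∈ univ.filter (fun j : Fin n => (j : ℕ) ≤ K), lagBasis x j u
          = lagBasis x k u + ∑ j ∈ univ.filter (fun j : Fin n => (j : ℕ) < K), lagBasis x j u := by
        rw [hsplitk, Finset.sum_insert hknotin]
      have hA := signA x hdec m hm u hu1 hu2s K hk
      have hC : (-1:ℝ)^((m:ℕ)+K) *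
          ∑ j ∈ univ.filter (fun j : Fin n => (j : ℕ) < K), lagBasis x j u ≤ 0 := by
        rcases Nat.eq_zero_or_pos K with h0 | hpos
        · have : univ.filter (fun j : Fin n => (j : ℕ) < K) = ∅ := by
            ext j; simp; omega
          rw [this]
          simp
        · have h1 : univ.filter (fun j : Fin n => (j : ℕ) < K)
              = univ.filter (fun j : Fin n => (j : ℕ) ≤ K - 1) := by
            ext j; simp; omega
          have hs := signA x hdec m hm u hu1 hu2s (K - 1) (by omega)
          rw [h1, show (m:ℕ) + K = ((m:ℕ) + (K-1)) + 1 by omega, pow_succ]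
          nlinarith
      exact key_ineq ((-1:ℝ)^((m:ℕ)+K)) _ _ _ (neg_one_pow_cases _) hA hC hAsplit
    · intro hk
      set K := (k : ℕ) with hKdef
      have hsplitk : univ.filter (fun j : Fin n => K ≤ (j : ℕ))
          = insert k (univ.filter (fun j : Fin n => K + 1 ≤ (j : ℕ))) := by
        ext j
        simp only [Finset.mem_insert, Finset.mem_filter, Finset.mem_univ, true_and]
        constructor
        · intro h
          rcases eq_or_lt_of_le h with h | h
          · exact Or.inl (Fin.ext h.symm)
          · exact Or.inr h
        · rintro (rfl | h)
          · exact le_refl _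
          · omega
      have hknotin : k ∉ univ.filter (fun j : Fin n => K + 1 ≤ (j : ℕ)) := by simp [hKdef]
      have hAsplit : ∑ j ∈ univ.filter (fun j : Fin n => K ≤ (j : ℕ)), lagBasis x j u
          = lagBasis x k u + ∑ j ∈ univ.filter (fun j : Fin n => K + 1 ≤ (j : ℕ)), lagBasis x j u := by
        rw [hsplitk, Finset.sum_insert hknotin]
      have hA := signB x hdec m hm u hu1 hu2s K hk k.isLt
      have hC : (-1:ℝ)^((m:ℕ)+K+1) *
          ∑ j ∈ univ.filter (fun j : Fin n => K + 1 ≤ (j : ℕ)), lagBasis x j u ≤ 0 := by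
        rcases eq_or_lt_of_le (Nat.succ_le_of_lt k.isLt) with h0 | hlt
        · have : univ.filter (fun j : Fin n => K + 1 ≤ (j : ℕ)) = ∅ := by
            ext j; simp; omega
          rw [this]
          simp
        · have hs := signB x hdec m hm u hu1 hu2s (K + 1) (by omega) hlt
          rw [show (m:ℕ) + (K+1) + 1 = ((m:ℕ) + K + 1) + 1 by omega, pow_succ] at hs
          nlinarith
      exact key_ineq ((-1:ℝ)^((m:ℕ)+K+1)) _ _ _ (neg_one_pow_cases _) hA hC hAsplit
end

section
/- Sign of a_k via Rolle's theorem structure: for k ≤ m, the polynomial a_k(t) = ∑_{j=1}^k ℓ_j(t) of degree n-1 satisfies a_k(x_j) = 1 for j = 1,...,k and a_k(x_j) = 0 for j = k+1,...,n; consequently its derivative a_k'(t), a polynomial of degree n-2, has exactly n-2 zeros, one in each interval (x_{j+1}, x_j) for j ∈ {1,...,n-1} \ {k}. -/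
open Finset Polynomial

/-- The `k`-th Lagrange basis polynomial (as a `Polynomial ℝ`) for nodes
`x : Fin n → ℝ` (indices `0,…,n-1` correspond to `x_1 > x_2 > … > x_n`). -/
noncomputable def lagBasisPoly {n : ℕ} (x : Fin n → ℝ) (k : Fin n) : Polynomial ℝ :=
  ∏ j ∈ Finset.univ.erase k, Polynomial.C ((x k - x j)⁻¹) * (Polynomial.X - Polynomial.C (x j))

/-- The partial sum `a_k = ℓ_1 + ⋯ + ℓ_k` (0-indexed: `∑_{j ≤ k} ℓ_j`). -/
noncomputable def partialSumPoly {n : ℕ} (x : Fin n → ℝ) (k : Fin n) : Polynomial ℝ :=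
  ∑ j ∈ Finset.univ.filter (fun j : Fin n => (j : ℕ) ≤ (k : ℕ)), lagBasisPoly x j

lemma lagBasisPoly_eq_basis {n : ℕ} (x : Fin n → ℝ) (k : Fin n) :
    lagBasisPoly x k = Lagrange.basis Finset.univ x k := rfl

theorem stmt15 {n : ℕ} (x : Fin n → ℝ)
    (hdec : ∀ i j : Fin n, i < j → x j < x i)
    (hmem : ∀ i, x i ∈ Set.Icc (-1 : ℝ) 1)
    (k : Fin n) (hk : (k : ℕ) + 1 < n) :
    (∀ j : Fin n, (j : ℕ) ≤ (k : ℕ) → (partialSumPoly x k).eval (x j) = 1) ∧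
    (∀ j : Fin n, (k : ℕ) < (j : ℕ) → (partialSumPoly x k).eval (x j) = 0) ∧
    (partialSumPoly x k).derivative.natDegree = n - 2 ∧
    (∀ j : Fin n, ∀ hj : (j : ℕ) + 1 < n, j ≠ k →
      ∃! y : ℝ, y ∈ Set.Ioo (x ⟨(j : ℕ) + 1, hj⟩) (x j) ∧
        (partialSumPoly x k).derivative.eval y = 0) := by
  classical
  have hinj : Function.Injective x := by
    intro i j h
    by_contra hne
    rcases lt_or_gt_of_ne (fun h' : i = j => hne h') with h1 | h1
    · exact absurd h (ne_of_gt (hdec i j h1))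
    · exact absurd h (ne_of_lt (hdec j i h1))
  set p := partialSumPoly x k with hp
  have heval : ∀ j : Fin n, p.eval (x j) = if (j : ℕ) ≤ (k : ℕ) then 1 else 0 := by
    intro j
    rw [hp, partialSumPoly, eval_finset_sum]
    by_cases hj : (j : ℕ) ≤ (k : ℕ)
    · rw [if_pos hj]
      rw [Finset.sum_eq_single_of_mem j (by simpa using hj)]
      · rw [lagBasisPoly_eq_basis, Lagrange.eval_basis_self (hinj.injOn) (mem_univ j)]
      · intro i _ hij
        rw [lagBasisPoly_eq_basis, Lagrange.eval_basis_of_ne hij (mem_univ j)]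
    · rw [if_neg hj]
      refine Finset.sum_eq_zero fun i hi => ?_
      rw [lagBasisPoly_eq_basis, Lagrange.eval_basis_of_ne ?_ (mem_univ j)]
      rintro rfl
      exact hj (by simpa using hi)
  -- degree bound
  have hpdeg : p.natDegree ≤ n - 1 := by
    refine Polynomial.natDegree_sum_le_of_forall_le _ _ fun i _ => ?_
    rw [lagBasisPoly_eq_basis, Lagrange.natDegree_basis hinj.injOn (mem_univ i), card_univ,
      Fintype.card_fin]
  have hqle : p.derivative.natDegree ≤ n - 2 := by
    have := p.natDegree_derivative_le
    omega
  -- separated intervals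
  have hsep0 : ∀ (i j : Fin n) (hi : (i:ℕ)+1 < n) (hj : (j:ℕ)+1 < n), (i:ℕ) < (j:ℕ) →
      ∀ y, y ∈ Set.Ioo (x ⟨(i:ℕ)+1, hi⟩) (x i) → y ∈ Set.Ioo (x ⟨(j:ℕ)+1, hj⟩) (x j) → False := by
    intro i j hi hj hij y hyi hyj
    have h1 : x j ≤ x ⟨(i:ℕ)+1, hi⟩ := by
      rcases eq_or_lt_of_le (Nat.succ_le_of_lt hij) with h | h
      · exact le_of_eq (congrArg x (Fin.ext h.symm))
      · exact le_of_lt (hdec ⟨(i:ℕ)+1, hi⟩ j h)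
    exact absurd (hyj.2.trans_le (h1.trans (le_of_lt hyi.1))) (lt_irrefl y)
  have hsep : ∀ (i j : Fin n) (hi : (i:ℕ)+1 < n) (hj : (j:ℕ)+1 < n), i ≠ j →
      ∀ y, y ∈ Set.Ioo (x ⟨(i:ℕ)+1, hi⟩) (x i) → y ∈ Set.Ioo (x ⟨(j:ℕ)+1, hj⟩) (x j) → False := by
    intro i j hi hj hij y hyi hyj
    rcases lt_or_gt_of_ne (fun h : (i:ℕ) = (j:ℕ) => hij (Fin.ext h)) with h | h
    · exact hsep0 i j hi hj h y hyi hyj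
    · exact hsep0 j i hj hi h y hyj hyi
  -- Rolle
  have hroot : ∀ (j : Fin n) (hj : (j:ℕ)+1 < n), j ≠ k →
      ∃ y ∈ Set.Ioo (x ⟨(j:ℕ)+1, hj⟩) (x j), p.derivative.eval y = 0 := by
    intro j hj hjk
    have hab : x ⟨(j:ℕ)+1, hj⟩ < x j := hdec j ⟨(j:ℕ)+1, hj⟩ (by simp [Fin.lt_def])
    have hfI : p.eval (x ⟨(j:ℕ)+1, hj⟩) = p.eval (x j) := by
      rw [heval, heval]
      simp only [Fin.val_mk]
      rcases lt_or_gt_of_ne (fun h : (j:ℕ) = (k:ℕ) => hjk (Fin.ext h)) with h | h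
      · simp only [if_pos (le_of_lt h), if_pos (Nat.succ_le_of_lt h)]
      · rw [if_neg (by omega), if_neg (by omega)]
    obtain ⟨c, hc, hc0⟩ := exists_deriv_eq_zero (f := fun t => p.eval t) hab
      ((Polynomial.continuous p).continuousOn) hfI
    rw [Polynomial.deriv] at hc0
    exact ⟨c, hc, hc0⟩
  -- nonzero derivative
  have hne : p.derivative ≠ 0 := by
    intro h0
    have h1 := Polynomial.eq_C_of_natDegree_eq_zero
      (Polynomial.natDegree_eq_zero_of_derivative_eq_zero h0)
    have e1 := heval k
    have e2 := heval ⟨(k:ℕ)+1, hk⟩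
    rw [h1] at e1 e2
    simp only [eval_C] at e1 e2
    rw [if_pos le_rfl] at e1
    rw [if_neg (by simp)] at e2
    rw [e1] at e2
    exact one_ne_zero e2
  -- counting roots
  choose g hg1 hg2 using hroot
  set g' : Fin n → ℝ := fun j =>
    if h : ((j:ℕ)+1 < n) ∧ j ≠ k then g j h.1 h.2 else 0 with hg'
  have hg'mem : ∀ (j : Fin n) (hj : (j:ℕ)+1 < n) (hjk : j ≠ k),
      g' j ∈ Set.Ioo (x ⟨(j:ℕ)+1, hj⟩) (x j) ∧ p.derivative.eval (g' j) = 0 := by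
    intro j hj hjk
    have hgj : g' j = g j hj hjk := by rw [hg']; exact dif_pos ⟨hj, hjk⟩
    rw [hgj]
    exact ⟨hg1 j hj hjk, hg2 j hj hjk⟩
  set S : Finset (Fin n) :=
    univ.filter (fun j : Fin n => (j:ℕ)+1 < n ∧ j ≠ k) with hSdef
  have hT : (univ.filter (fun j : Fin n => (j:ℕ)+1 < n)).card = n - 1 := by
    have hsum := Finset.card_filter_add_card_filter_not (s := (univ : Finset (Fin n)))
      (p := fun j : Fin n => (j:ℕ)+1 < n)
    have hneg : univ.filter (fun j : Fin n => ¬((j:ℕ)+1 < n)) = {⟨n-1, by omega⟩} := by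
      ext j
      simp only [mem_filter, mem_univ, true_and, Finset.mem_singleton, Fin.ext_iff, Fin.val_mk]
      have := j.isLt
      omega
    rw [hneg, Finset.card_singleton, card_univ, Fintype.card_fin] at hsum
    omega
  have hScard : S.card = n - 2 := by
    have hS : S = (univ.filter (fun j : Fin n => (j:ℕ)+1 < n)).erase k := by
      ext j
      simp only [hSdef, mem_filter, mem_univ, true_and, Finset.mem_erase]
      tauto
    rw [hS, Finset.card_erase_of_mem (by simp [hk]), hT]
    omega
  have hginj : Set.InjOn g' S := by
    intro a ha b hb hab
    by_contra hne'
    simp only [hSdef, Finset.coe_filter, Set.mem_setOf_eq, mem_univ, true_and] at ha hb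
    exact hsep a b ha.1 hb.1 hne' (g' a) (hg'mem a ha.1 ha.2).1
      (hab ▸ (hg'mem b hb.1 hb.2).1)
  have hroots_sub : ∀ (Z : Finset ℝ), (∀ y ∈ Z, p.derivative.eval y = 0) →
      Z.card ≤ p.derivative.natDegree := by
    intro Z hZ
    refine Polynomial.card_le_degree_of_subset_roots ?_
    intro y hy
    exact (Polynomial.mem_roots').mpr ⟨hne, hZ y hy⟩
  have hdeg : p.derivative.natDegree = n - 2 := by
    have h1 : (S.image g').card ≤ p.derivative.natDegree := by
      refine hroots_sub _ fun y hy => ?_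
      obtain ⟨j, hjS, rfl⟩ := Finset.mem_image.mp hy
      simp only [hSdef, mem_filter, mem_univ, true_and] at hjS
      exact (hg'mem j hjS.1 hjS.2).2
    rw [Finset.card_image_of_injOn hginj, hScard] at h1
    omega
  refine ⟨fun j hj => by rw [heval, if_pos hj], fun j hj => by rw [heval, if_neg (by omega)],
    hdeg, fun j hj hjk => ?_⟩
  refine ⟨g' j, ⟨(hg'mem j hj hjk).1, (hg'mem j hj hjk).2⟩, ?_⟩
  intro z hz
  by_contra hzne
  have hjS : j ∈ S := by simp [hSdef, hj, hjk]
  have hn3 : 3 ≤ n := by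
    have h1 := j.isLt
    have h2 : (j:ℕ) ≠ (k:ℕ) := fun h => hjk (Fin.ext h)
    omega
  have hnotmem : ∀ w, w ∈ Set.Ioo (x ⟨(j:ℕ)+1, hj⟩) (x j) →
      w ∉ (S.erase j).image g' := by
    intro w hw hmemi
    obtain ⟨i, hiS, rfl⟩ := Finset.mem_image.mp hmemi
    have hij : i ≠ j := (Finset.mem_erase.mp hiS).1
    have hiS' := (Finset.mem_erase.mp hiS).2
    simp only [hSdef, mem_filter, mem_univ, true_and] at hiS'
    exact hsep i j hiS'.1 hj hij (g' i) (hg'mem i hiS'.1 hiS'.2).1 hw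
  have hzni : z ∉ insert (g' j) ((S.erase j).image g') := by
    simp only [Finset.mem_insert, not_or]
    exact ⟨hzne, hnotmem z hz.1⟩
  have hgni : g' j ∉ (S.erase j).image g' := hnotmem (g' j) (hg'mem j hj hjk).1
  have hcard : (insert z (insert (g' j) ((S.erase j).image g'))).card = n - 1 := by
    rw [Finset.card_insert_of_notMem hzni, Finset.card_insert_of_notMem hgni,
      Finset.card_image_of_injOn (hginj.mono (by exact_mod_cast Finset.erase_subset j S)),
      Finset.card_erase_of_mem hjS, hScard]
    omega
  have hb := hroots_sub (insert z (insert (g' j) ((S.erase j).image g'))) ?_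
  · rw [hcard] at hb; omega
  · intro y hy
    simp only [Finset.mem_insert] at hy
    rcases hy with rfl | rfl | hy
    · exact hz.2
    · exact (hg'mem j hj hjk).2
    · obtain ⟨i, hiS, rfl⟩ := Finset.mem_image.mp hy
      have hiS' := (Finset.mem_erase.mp hiS).2
      simp only [hSdef, mem_filter, mem_univ, true_and] at hiS'
      exact (hg'mem i hiS'.1 hiS'.2).2
end

section
/- Strongly normal pointsystems have uniformly bounded Lagrange basis: if the nodes x_1,...,x_n ∈ [-1,1] satisfy v_k(t) = 1 - (t - x_k) ω''(x_k)/ω'(x_k) ≥ c > 0 for all k and all t ∈ [-1,1] (strong normality), then ∑_{i=1}^n v_i(t) ℓ_i(t)^2 = 1 for all t, and consequently ‖ℓ_i‖_∞ ≤ 1/√c for every i = 1,...,n. -/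
open Finset Polynomial

/-- The node polynomial `ω(t) = ∏ (t - x_j)`. -/
noncomputable def omegaPoly {n : ℕ} (x : Fin n → ℝ) : Polynomial ℝ :=
  ∏ j, (Polynomial.X - Polynomial.C (x j))

/-- Fejér's function `v_k(t) = 1 - (t - x_k) ω''(x_k)/ω'(x_k)`. -/
noncomputable def fejerV {n : ℕ} (x : Fin n → ℝ) (k : Fin n) (t : ℝ) : ℝ :=
  1 - (t - x k) *
    ((omegaPoly x).derivative.derivative.eval (x k) / (omegaPoly x).derivative.eval (x k))

namespace Stmt17Aux

/-- `N_k(X) = ∏_{j ≠ k} (X - x_j)`. -/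
noncomputable def Np {n : ℕ} (x : Fin n → ℝ) (k : Fin n) : Polynomial ℝ :=
  ∏ j ∈ Finset.univ.erase k, (X - C (x j))

/-- Polynomial Lagrange basis. -/
noncomputable def Lp {n : ℕ} (x : Fin n → ℝ) (k : Fin n) : Polynomial ℝ :=
  C (((Np x k).eval (x k))⁻¹) * Np x k

/-- Polynomial Fejér `v_k`. -/
noncomputable def Vp {n : ℕ} (x : Fin n → ℝ) (k : Fin n) : Polynomial ℝ :=
  1 - (X - C (x k)) *
    C ((omegaPoly x).derivative.derivative.eval (x k) / (omegaPoly x).derivative.eval (x k))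

variable {n : ℕ} (x : Fin n → ℝ)

lemma Np_eval (k : Fin n) (t : ℝ) :
    (Np x k).eval t = ∏ j ∈ Finset.univ.erase k, (t - x j) := by
  simp [Np, eval_prod]

lemma Np_eval_self_ne_zero (hinj : Function.Injective x) (k : Fin n) :
    (Np x k).eval (x k) ≠ 0 := by
  rw [Np_eval]
  exact Finset.prod_ne_zero_iff.mpr fun j hj =>
    sub_ne_zero_of_ne fun h => (Finset.mem_erase.mp hj).1 (hinj h.symm)

lemma Np_eval_other (k j : Fin n) (hjk : j ≠ k) : (Np x k).eval (x j) = 0 := by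
  rw [Np_eval]
  exact Finset.prod_eq_zero (Finset.mem_erase.mpr ⟨hjk, Finset.mem_univ j⟩) (sub_self _)

lemma omega_eq (k : Fin n) : omegaPoly x = (X - C (x k)) * Np x k := by
  rw [omegaPoly, Np, ← Finset.mul_prod_erase _ _ (Finset.mem_univ k)]

lemma omega_deriv_eval (k : Fin n) :
    (omegaPoly x).derivative.eval (x k) = (Np x k).eval (x k) := by
  rw [omega_eq x k]
  simp [derivative_mul]

lemma omega_deriv2_eval (k : Fin n) :
    (omegaPoly x).derivative.derivative.eval (x k) = 2 * (Np x k).derivative.eval (x k) := by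
  rw [omega_eq x k]
  simp [derivative_mul]
  ring

lemma Lp_eval (k : Fin n) (t : ℝ) : (Lp x k).eval t = lagBasis x k t := by
  rw [Lp, eval_mul, eval_C, Np_eval, Np_eval, ← Finset.prod_inv_distrib,
    ← Finset.prod_mul_distrib, lagBasis]
  exact Finset.prod_congr rfl fun j _ => by rw [div_eq_mul_inv, mul_comm]

lemma Vp_eval (k : Fin n) (t : ℝ) : (Vp x k).eval t = fejerV x k t := by
  simp [Vp, fejerV]

lemma Lp_eval_self (hinj : Function.Injective x) (k : Fin n) : (Lp x k).eval (x k) = 1 := by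
  simp [Lp, inv_mul_cancel₀ (Np_eval_self_ne_zero x hinj k)]

lemma Lp_eval_other (k j : Fin n) (hjk : j ≠ k) : (Lp x k).eval (x j) = 0 := by
  simp [Lp, Np_eval_other x k j hjk]

lemma Vp_eval_self (k : Fin n) : (Vp x k).eval (x k) = 1 := by
  simp [Vp]

lemma Vp_deriv (k : Fin n) :
    (Vp x k).derivative =
      -C ((omegaPoly x).derivative.derivative.eval (x k) /
        (omegaPoly x).derivative.eval (x k)) := by
  simp [Vp, derivative_mul]

lemma Lp_deriv_eval_self (k : Fin n) :
    (Lp x k).derivative.eval (x k) =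
      ((Np x k).eval (x k))⁻¹ * (Np x k).derivative.eval (x k) := by
  simp [Lp, derivative_mul]

/-- Double-root criterion. -/
lemma sq_dvd_of_double_root {q : Polynomial ℝ} {a : ℝ} (h0 : q.eval a = 0)
    (h1 : q.derivative.eval a = 0) : (X - C a) ^ 2 ∣ q := by
  obtain ⟨r, hr⟩ := dvd_iff_isRoot.mpr h0
  have hra : r.eval a = 0 := by
    have := congrArg (fun p : Polynomial ℝ => p.derivative.eval a) hr
    simpa [derivative_mul, h1] using this.symm
  obtain ⟨s, hs⟩ := dvd_iff_isRoot.mpr hra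
  exact ⟨s, by rw [hr, hs]; ring⟩

/-- The Hermite–Fejér sum polynomial. -/
noncomputable def Pp : Polynomial ℝ := ∑ k, Vp x k * (Lp x k) ^ 2

lemma Pp_eval_node (hinj : Function.Injective x) (j : Fin n) : (Pp x).eval (x j) = 1 := by
  rw [Pp, eval_finset_sum]
  rw [Finset.sum_eq_single j]
  · simp [Vp_eval_self, Lp_eval_self x hinj]
  · intro k _ hkj
    simp [Lp_eval_other x k j (Ne.symm hkj)]
  · simp

lemma Pp_deriv_eval_node (hinj : Function.Injective x) (j : Fin n) :
    (Pp x).derivative.eval (x j) = 0 := by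
  rw [Pp, derivative_sum, eval_finset_sum]
  rw [Finset.sum_eq_single j]
  · have hd := Np_eval_self_ne_zero x hinj j
    simp only [derivative_mul, derivative_pow, eval_add, eval_mul, eval_pow,
      Lp_eval_self x hinj, Vp_eval_self, Vp_deriv, Lp_deriv_eval_self,
      omega_deriv_eval, omega_deriv2_eval, eval_neg, eval_C]
    field_simp
    norm_num
  · intro k _ hkj
    simp [derivative_mul, derivative_pow, Lp_eval_other x k j (Ne.symm hkj)]
  · simp

lemma natDegree_Np_le (k : Fin n) : (Np x k).natDegree ≤ n - 1 := by
  refine le_trans (natDegree_prod_le _ _) ?_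
  refine le_trans (Finset.sum_le_card_nsmul _ _ 1 fun j _ => (natDegree_X_sub_C (x j)).le) ?_
  simp [Finset.card_erase_of_mem]

lemma natDegree_Pp_le (hn : 1 ≤ n) : (Pp x).natDegree ≤ 2 * n - 1 := by
  refine natDegree_sum_le_of_forall_le _ _ fun k _ => ?_
  refine le_trans (natDegree_mul_le) ?_
  have h1 : (Vp x k).natDegree ≤ 1 := by
    refine le_trans (natDegree_sub_le _ _) ?_
    simp only [natDegree_one, max_le_iff]
    refine ⟨Nat.zero_le _, le_trans natDegree_mul_le ?_⟩
    simp [natDegree_X_sub_C]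
  have h2 : ((Lp x k) ^ 2).natDegree ≤ 2 * (n - 1) := by
    refine le_trans (natDegree_pow_le) ?_
    have : (Lp x k).natDegree ≤ n - 1 := by
      refine le_trans natDegree_mul_le ?_
      simpa using natDegree_Np_le x k
    omega
  omega

lemma natDegree_omega : (omegaPoly x).natDegree = n := by
  rw [omegaPoly, natDegree_prod]
  · simp [natDegree_X_sub_C]
  · intro i _
    exact X_sub_C_ne_zero (x i)

lemma Pp_eq_one (hn : 1 ≤ n) (hinj : Function.Injective x) : Pp x = 1 := by
  have hdvd : omegaPoly x ^ 2 ∣ Pp x - 1 := by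
    rw [omegaPoly, ← Finset.prod_pow]
    refine Finset.prod_dvd_of_coprime (fun a _ b _ hab => ?_) (fun j _ => ?_)
    · exact (pairwise_coprime_X_sub_C hinj hab).pow
    · refine sq_dvd_of_double_root ?_ ?_
      · simp [Pp_eval_node x hinj j]
      · simp [Pp_deriv_eval_node x hinj j]
  by_contra hne
  have hq : Pp x - 1 ≠ 0 := sub_ne_zero_of_ne hne
  have hle : (omegaPoly x ^ 2).natDegree ≤ (Pp x - 1).natDegree :=
    natDegree_le_of_dvd hdvd hq
  have h1 : (omegaPoly x ^ 2).natDegree = 2 * n := by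
    rw [natDegree_pow, natDegree_omega]
  have h2 : (Pp x - 1).natDegree ≤ 2 * n - 1 := by
    refine le_trans (natDegree_sub_le _ _) ?_
    simp only [natDegree_one, max_le_iff]
    exact ⟨natDegree_Pp_le x hn, by omega⟩
  omega

end Stmt17Aux

open Stmt17Aux in
theorem stmt17 {n : ℕ} (hn : 1 ≤ n) (x : Fin n → ℝ)
    (hinj : Function.Injective x)
    (hmem : ∀ i, x i ∈ Set.Icc (-1 : ℝ) 1)
    (c : ℝ) (hc : 0 < c)
    (hsn : ∀ k : Fin n, ∀ t ∈ Set.Icc (-1 : ℝ) 1, c ≤ fejerV x k t) :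
    (∀ t : ℝ, ∑ k, fejerV x k t * (lagBasis x k t) ^ 2 = 1) ∧
    (∀ i : Fin n, ∀ t ∈ Set.Icc (-1 : ℝ) 1, |lagBasis x i t| ≤ 1 / Real.sqrt c) := by
  have hsum : ∀ t : ℝ, ∑ k, fejerV x k t * (lagBasis x k t) ^ 2 = 1 := by
    intro t
    have := congrArg (Polynomial.eval t) (Pp_eq_one x hn hinj)
    rw [Pp, eval_finset_sum] at this
    simpa [Vp_eval, Lp_eval] using this
  refine ⟨hsum, fun i t ht => ?_⟩
  have hterm : ∀ k : Fin n, 0 ≤ fejerV x k t * (lagBasis x k t) ^ 2 := fun k =>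
    mul_nonneg (le_trans hc.le (hsn k t ht)) (sq_nonneg _)
  have hle1 : fejerV x i t * (lagBasis x i t) ^ 2 ≤ 1 := by
    rw [← hsum t]
    exact Finset.single_le_sum (fun k _ => hterm k) (Finset.mem_univ i)
  have hcle : c * (lagBasis x i t) ^ 2 ≤ 1 :=
    le_trans (mul_le_mul_of_nonneg_right (hsn i t ht) (sq_nonneg _)) hle1
  have hsq : (lagBasis x i t) ^ 2 ≤ 1 / c := by
    rw [le_div_iff₀ hc]; linarith
  have := Real.sqrt_le_sqrt hsq
  rw [Real.sqrt_sq_eq_abs] at this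
  calc |lagBasis x i t| ≤ Real.sqrt (1 / c) := this
    _ = 1 / Real.sqrt c := by
      rw [one_div, Real.sqrt_inv, one_div]
end
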